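/- arXiv:1112.5009 — 2 statements merged into one kernel-verified Lean document; each statement's English description precedes it below -/
import Mathlib

section
/- Let M be a connected topological manifold, let T be a locally compact Polish space, let Λ be a Borel measure on T, and equip M × T with the product lamination whose leaves are the sets M × {s}. Let A ⊆ M × T be a Borel transversal, i.e. every point of A has an open neighborhood V in M × T such that the projection to T maps A ∩ V homeomorphically onto an open subset of T. If card(A ∩ (M × {s})) ≤ Cat(M) for every s ∈ T, where Cat(M) is the Lusternik–Schnirelmann category of M, then Λ̃(A) ≤ Cat(M×T, Λ). -/
open MeasureTheory Set ENNReal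

/-- `Λ̃(A) = ∫⁻ s, #(A ∩ (M × {s})) dΛ(s)`: the lower integral of the extended-natural-number
cardinality of the slices of `A ⊆ M × T`, valued in `[0,∞]`. -/
noncomputable def lamMeasure (M : Type*) {T : Type*} [MeasurableSpace T]
    (Λ : Measure T) (A : Set (M × T)) : ℝ≥0∞ :=
  ∫⁻ s, ({m : M | (m, s) ∈ A}.encard : ℝ≥0∞) ∂Λ

/-- A tangential contraction of an open set `U ⊆ M × T` (for the product lamination with
leaves `M × {s}`): a continuous map `H : U × [0,1] → M × T` preserving the `T`-coordinate,
starting at the inclusion, and whose time-one map is constant on each connected component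
of each slice `U ∩ (M × {s})`. -/
structure IsTangentialContraction {M T : Type*} [TopologicalSpace M] [TopologicalSpace T]
    (U : Set (M × T)) (H : (M × T) × ℝ → M × T) : Prop where
  continuousOn : ContinuousOn H (U ×ˢ Icc (0 : ℝ) 1)
  leafwise : ∀ x ∈ U, ∀ t ∈ Icc (0 : ℝ) 1, (H (x, t)).2 = x.2
  init : ∀ x ∈ U, H (x, 0) = x
  final : ∀ x y : M × T, x ∈ U →
    y ∈ connectedComponentIn {z ∈ U | z.2 = x.2} x → H (x, 1) = H (y, 1)

/-- `τ_Λ(U)`: the infimum of `Λ̃(H(U × {1}))` over all tangential contractions `H` of `U`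
(equal to `∞` when `U` is not tangentially categorical). -/
noncomputable def tauLam {M T : Type*} [TopologicalSpace M] [TopologicalSpace T]
    [MeasurableSpace T] (Λ : Measure T) (U : Set (M × T)) : ℝ≥0∞ :=
  ⨅ H : { H : (M × T) × ℝ → M × T // IsTangentialContraction U H },
    lamMeasure M Λ ((fun x => H.1 (x, 1)) '' U)

/-- The measured category `Cat(M×T, Λ)` of the product lamination: the infimum, over
countable coverings of `M × T` by tangentially categorical open sets, of `Σ τ_Λ(U_i)`. -/
noncomputable def lamCat (M T : Type*) [TopologicalSpace M] [TopologicalSpace T]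
    [MeasurableSpace T] (Λ : Measure T) : ℝ≥0∞ :=
  sInf { m : ℝ≥0∞ | ∃ U : ℕ → Set (M × T),
    (∀ i, IsOpen (U i)) ∧ (⋃ i, U i) = Set.univ ∧
    (∀ i, ∃ H, IsTangentialContraction (U i) H) ∧
    m = ∑' i, tauLam Λ (U i) }

/-- The Lusternik–Schnirelmann category of `M`, valued in `[0,∞]`: the least number `k` of
open sets covering `M` whose inclusions are null-homotopic, and `∞` if there is no such
finite cover. -/
noncomputable def LScat (M : Type*) [TopologicalSpace M] : ℝ≥0∞ :=
  sInf { m : ℝ≥0∞ | ∃ k : ℕ, m = k ∧ ∃ U : Fin k → Set M,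
    (∀ i, IsOpen (U i)) ∧ (⋃ i, U i) = Set.univ ∧
    ∀ i, ∃ c : M, ContinuousMap.Homotopic
      ⟨fun x : U i => (x : M), continuous_subtype_val⟩ (ContinuousMap.const (U i) c) }

/-- A Borel transversal of the product lamination on `M × T`: a measurable set `A` each of
whose points has an open neighbourhood `V` such that the projection to `T` maps `A ∩ V`
homeomorphically onto an open subset of `T`. -/
def IsBorelTransversal {M T : Type*} [TopologicalSpace M] [TopologicalSpace T]
    [MeasurableSpace M] [MeasurableSpace T] (A : Set (M × T)) : Prop :=
  MeasurableSet A ∧ ∀ x ∈ A, ∃ V : Set (M × T), IsOpen V ∧ x ∈ V ∧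
    ∃ W : Set T, IsOpen W ∧ Prod.snd '' (A ∩ V) = W ∧ Set.InjOn Prod.snd (A ∩ V) ∧
      ∃ f : T → M × T, ContinuousOn f W ∧ ∀ s ∈ W, f s ∈ A ∩ V ∧ (f s).2 = s


open Topology Filter

/-- A charted space modeled on a locally path-connected space is locally path-connected. -/
theorem locPathConnected_of_chartedSpace {H M : Type*} [TopologicalSpace H] [TopologicalSpace M]
    [ChartedSpace H M] [LocallyPathConnectedSpace H] : LocallyPathConnectedSpace M := by
  let e : M → OpenPartialHomeomorph M H := chartAt H
  refine LocallyPathConnectedSpace.of_bases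
      (p := fun x s => (s ∈ 𝓝 (e x x) ∧ IsPathConnected s) ∧ s ⊆ (e x).target)
      (s := fun x s => (e x).symm '' s) ?_ ?_
  · intro x
    simpa only [e, OpenPartialHomeomorph.symm_map_nhds_eq, mem_chart_source, id] using
      (((path_connected_basis (e x x)).restrict_subset
        ((e x).open_target.mem_nhds (mem_chart_target H x))).map (e x).symm)
  · rintro x s ⟨⟨-, hsp⟩, hsub⟩
    exact hsp.image' ((e x).continuousOn_symm.mono hsub)

/-- The slice of a tangentially categorical open set is categorical in `M`. -/
theorem slice_homotopic {M T : Type*} [TopologicalSpace M] [TopologicalSpace T]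
    [LocallyPathConnectedSpace M] [PathConnectedSpace M]
    {U : Set (M × T)} (hU : IsOpen U) {H : (M × T) × ℝ → M × T}
    (hH : IsTangentialContraction U H) (s : T) :
    ∃ c : M, ContinuousMap.Homotopic
      ⟨fun x : ({m : M | (m, s) ∈ U} : Set M) => (x : M), continuous_subtype_val⟩
      (ContinuousMap.const ({m : M | (m, s) ∈ U} : Set M) c) := by
  classical
  set V : Set M := {m : M | (m, s) ∈ U} with hVdef
  have hV : IsOpen V := hU.preimage (continuous_id.prodMk continuous_const)
  set g : M → M := fun m => (H ((m, s), 1)).1 with hgdef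
  -- continuity of the full track
  have htrack : Continuous fun p : unitInterval × V => (H ((p.2.1, s), (p.1 : ℝ))).1 := by
    apply Continuous.fst
    apply hH.continuousOn.comp_continuous
    · exact ((continuous_subtype_val.comp continuous_snd).prodMk
        continuous_const).prodMk (continuous_subtype_val.comp continuous_fst)
    · rintro ⟨t, ⟨m, hm⟩⟩
      exact ⟨hm, t.2⟩
  have hgc : Continuous fun x : V => g x.1 := by
    have heq : (fun x : V => g x.1) =
        (fun p : unitInterval × V => (H ((p.2.1, s), (p.1 : ℝ))).1) ∘
        (fun x : V => ((1 : unitInterval), x)) := by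
      funext x; simp [hgdef]
    rw [heq]
    exact htrack.comp (continuous_const.prodMk continuous_id)
  -- first homotopy: inclusion ~ g
  have hom1 : ContinuousMap.Homotopic
      ⟨fun x : V => (x : M), continuous_subtype_val⟩ ⟨fun x : V => g x.1, hgc⟩ := by
    refine ⟨⟨⟨fun p => (H ((p.2.1, s), (p.1 : ℝ))).1, htrack⟩, ?_, ?_⟩⟩
    · intro x
      have := hH.init (x.1, s) x.2
      simpa using congrArg Prod.fst this
    · intro x
      simp [hgdef]
  -- local constancy of g on components of V
  have hconst : ∀ x : M, x ∈ V → ∀ y ∈ connectedComponentIn V x, g y = g x := by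
    intro x hx y hy
    have himg : ((fun m => (m, s)) '' connectedComponentIn V x : Set (M × T)) ⊆
        connectedComponentIn {z ∈ U | z.2 = (x, s).2} (x, s) := by
      apply IsPreconnected.subset_connectedComponentIn
      · exact (isPreconnected_connectedComponentIn).image _
          ((continuous_id.prodMk continuous_const).continuousOn)
      · exact ⟨x, mem_connectedComponentIn hx, rfl⟩
      · rintro _ ⟨m, hm, rfl⟩
        exact ⟨connectedComponentIn_subset V x hm, rfl⟩
    have := hH.final (x, s) (y, s) hx (himg ⟨y, hy, rfl⟩)
    exact (congrArg Prod.fst this).symm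
  -- second homotopy: g ~ constant
  obtain ⟨c⟩ : Nonempty M := inferInstance
  set γ : ∀ a : M, Path a c := fun a => PathConnectedSpace.somePath a c with hγdef
  have hGc : Continuous fun p : unitInterval × V => (γ (g p.2.1)) p.1 := by
    rw [continuous_iff_continuousAt]
    rintro ⟨t, ⟨x, hx⟩⟩
    have h2 : ContinuousAt (fun p : unitInterval × V => (γ (g x)) p.1) (t, ⟨x, hx⟩) :=
      ((γ (g x)).continuous.comp continuous_fst).continuousAt
    apply h2.congr_of_eventuallyEq
    have hopen : IsOpen {p : unitInterval × V | p.2.1 ∈ connectedComponentIn V x} :=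
      (hV.connectedComponentIn).preimage (continuous_subtype_val.comp continuous_snd)
    have hmem : {p : unitInterval × V | p.2.1 ∈ connectedComponentIn V x}
        ∈ 𝓝 ((t, ⟨x, hx⟩) : unitInterval × V) :=
      hopen.mem_nhds (mem_connectedComponentIn hx)
    filter_upwards [hmem] with p hp
    rw [hconst x hx p.2.1 hp]
  have hom2 : ContinuousMap.Homotopic ⟨fun x : V => g x.1, hgc⟩
      (ContinuousMap.const V c) := by
    refine ⟨⟨⟨fun p => (γ (g p.2.1)) p.1, hGc⟩, ?_, ?_⟩⟩
    · intro x; simp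
    · intro x; simp
  exact ⟨c, hom1.trans hom2⟩

/-- Pointwise count bound: on each leaf, `LScat M` is at most the number of sets of the
covering that meet the leaf. -/
theorem LScat_le_encard_meets {M T : Type*} [TopologicalSpace M] [TopologicalSpace T]
    [LocallyPathConnectedSpace M] [PathConnectedSpace M]
    (U : ℕ → Set (M × T)) (hUo : ∀ i, IsOpen (U i)) (hUc : (⋃ i, U i) = Set.univ)
    (hHex : ∀ i, ∃ H, IsTangentialContraction (U i) H) (s : T) :
    LScat M ≤ ({i : ℕ | ∃ m, (m, s) ∈ U i}.encard : ℝ≥0∞) := by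
  classical
  set I : Set ℕ := {i : ℕ | ∃ m, (m, s) ∈ U i} with hIdef
  rcases I.finite_or_infinite with hfin | hinf
  · set F := hfin.toFinset with hFdef
    have hle : LScat M ≤ (F.card : ℝ≥0∞) := by
      apply sInf_le
      refine ⟨F.card, rfl, fun j => {m : M | (m, s) ∈ U ((F.equivFin.symm j) : ℕ)}, ?_, ?_, ?_⟩
      · intro j
        exact (hUo _).preimage (continuous_id.prodMk continuous_const)
      · apply Set.eq_univ_of_forall
        intro m
        have : (m, s) ∈ ⋃ i, U i := by rw [hUc]; trivial
        obtain ⟨i, hi⟩ := Set.mem_iUnion.1 this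
        have hiI : i ∈ F := hfin.mem_toFinset.2 ⟨m, hi⟩
        refine Set.mem_iUnion.2 ⟨F.equivFin ⟨i, hiI⟩, ?_⟩
        show (m, s) ∈ U ((F.equivFin.symm (F.equivFin ⟨i, hiI⟩)) : ℕ)
        rw [Equiv.symm_apply_apply]
        exact hi
      · intro j
        exact slice_homotopic (hUo _) (hHex ((F.equivFin.symm j) : ℕ)).choose_spec s
    calc LScat M ≤ (F.card : ℝ≥0∞) := hle
      _ = (I.encard : ℝ≥0∞) := by
          rw [hfin.encard_eq_coe_toFinset_card]
          simp [hFdef]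
  · rw [Set.Infinite.encard_eq hinf]
    simp

/-- if `A` is a Borel transversal of the product lamination on `M × T` meeting
each leaf `M × {s}` in at most `Cat(M)` points, then `Λ̃(A) ≤ Cat(M×T, Λ)`. -/
theorem stmt8 {M T : Type*} [TopologicalSpace M] [T2Space M] [ConnectedSpace M]
    [MeasurableSpace M] [BorelSpace M]
    (n : ℕ) [ChartedSpace (EuclideanSpace ℝ (Fin n)) M]
    [TopologicalSpace T] [PolishSpace T] [LocallyCompactSpace T]
    [MeasurableSpace T] [BorelSpace T] (Λ : Measure T)
    (A : Set (M × T)) (hA : IsBorelTransversal A)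
    (hcard : ∀ s : T, ({m : M | (m, s) ∈ A}.encard : ℝ≥0∞) ≤ LScat M) :
    lamMeasure M Λ A ≤ lamCat M T Λ := by
  classical
  haveI : LocallyPathConnectedSpace M :=
    locPathConnected_of_chartedSpace (H := EuclideanSpace ℝ (Fin n))
  haveI : PathConnectedSpace M := pathConnectedSpace_iff_connectedSpace.2 inferInstance
  refine le_sInf ?_
  rintro m ⟨U, hUo, hUc, hHex, rfl⟩
  set S : ℕ → Set T := fun i => {s | ∃ m', (m', s) ∈ U i} with hSdef
  have hSo : ∀ i, IsOpen (S i) := by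
    intro i
    have hset : S i = Prod.snd '' U i := by
      ext s
      constructor
      · rintro ⟨m', hm⟩; exact ⟨(m', s), hm, rfl⟩
      · rintro ⟨⟨m', s'⟩, h, rfl⟩; exact ⟨m', h⟩
    rw [hset]
    exact isOpenMap_snd _ (hUo i)
  set f : ℕ → T → ℝ≥0∞ := fun i => (S i).indicator (fun _ => 1) with hfdef
  have hfm : ∀ i, Measurable (f i) := fun i => measurable_const.indicator (hSo i).measurableSet
  have step1 : ∀ i, ∫⁻ s, f i s ∂Λ ≤ tauLam Λ (U i) := by
    intro i
    refine le_iInf fun Hp => ?_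
    obtain ⟨H, hH⟩ := Hp
    refine lintegral_mono fun s => ?_
    simp only [hfdef]
    by_cases hs : s ∈ S i
    · rw [Set.indicator_of_mem hs]
      obtain ⟨m', hm⟩ := hs
      have h2 : (H ((m', s), 1)).2 = s := hH.leafwise (m', s) hm 1 ⟨zero_le_one, le_refl 1⟩
      have hmem : ((H ((m', s), 1)).1, s) ∈ (fun x => H (x, 1)) '' U i := by
        have heq : ((H ((m', s), 1)).1, s) = H ((m', s), 1) := by
          exact Prod.ext rfl h2.symm
        rw [heq]
        exact Set.mem_image_of_mem _ hm
      have hone : 1 ≤ {m'' : M | (m'', s) ∈ (fun x => H (x, 1)) '' U i}.encard :=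
        Set.one_le_encard_iff_nonempty.2 ⟨_, hmem⟩
      calc (1 : ℝ≥0∞) = ((1 : ℕ∞) : ℝ≥0∞) := by simp
        _ ≤ _ := ENat.toENNReal_le.2 hone
    · rw [Set.indicator_of_notMem hs]
      exact bot_le
  have step2 : lamMeasure M Λ A ≤ ∫⁻ s, ∑' i, f i s ∂Λ := by
    refine lintegral_mono fun s => ?_
    have h1 : ∑' i, f i s = ({i : ℕ | ∃ m', (m', s) ∈ U i}.encard : ℝ≥0∞) := by
      have hcongr : ∀ i, f i s =
          Set.indicator {i : ℕ | ∃ m', (m', s) ∈ U i} (fun _ => (1 : ℝ≥0∞)) i := by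
        intro i
        simp only [hfdef]
        by_cases hsi : ∃ m', (m', s) ∈ U i
        · rw [Set.indicator_of_mem (show s ∈ S i from hsi),
            Set.indicator_of_mem (show i ∈ {i : ℕ | ∃ m', (m', s) ∈ U i} from hsi)]
        · rw [Set.indicator_of_notMem (show s ∉ S i from hsi),
            Set.indicator_of_notMem (show i ∉ {i : ℕ | ∃ m', (m', s) ∈ U i} from hsi)]
      rw [tsum_congr hcongr, ← tsum_subtype, ENNReal.tsum_set_one]
    rw [h1]
    exact (hcard s).trans (LScat_le_encard_meets U hUo hUc hHex s)
  calc lamMeasure M Λ A ≤ ∫⁻ s, ∑' i, f i s ∂Λ := step2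
    _ = ∑' i, ∫⁻ s, f i s ∂Λ := lintegral_tsum fun i => (hfm i).aemeasurable
    _ ≤ ∑' i, tauLam Λ (U i) := ENNReal.tsum_le_tsum step1
end

section
/- Let M be a connected topological manifold, let T be a locally compact Polish space, let Λ be a Borel measure on T, and equip M × T with the product lamination whose leaves are the sets M × {s}. Let {T_k}_{k∈ℕ} be a countable family of open subsets of T with ⋃_k T_k = T. Then Cat(M×T, Λ) ≤ Σ_k Cat(M×T_k, Λ|_{T_k}); moreover, if the sets T_k are pairwise disjoint, then equality holds: Cat(M×T, Λ) = Σ_k Cat(M×T_k, Λ|_{T_k}). -/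
open MeasureTheory Set ENNReal

open Topology Filter


lemma myContinuousOn_image {A B C : Type*} [TopologicalSpace A] [TopologicalSpace B]
    [TopologicalSpace C] {j : A → B} (hj : Topology.IsOpenEmbedding j) {F : B → C} {s : Set A}
    (h : ContinuousOn (F ∘ j) s) : ContinuousOn F (j '' s) := by
  rintro x ⟨a, ha, rfl⟩
  have := h a ha
  unfold ContinuousWithinAt at this ⊢
  rw [← hj.isEmbedding.map_nhdsWithin_eq, Filter.tendsto_map'_iff]
  exact this

lemma myConnCompIn_image {A B : Type*} [TopologicalSpace A] [TopologicalSpace B]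
    {j : A → B} (hj : Topology.IsEmbedding j) (s : Set A) {a : A} (ha : a ∈ s) :
    connectedComponentIn (j '' s) (j a) = j '' connectedComponentIn s a := by
  refine Subset.antisymm ?_ (hj.continuous.image_connectedComponentIn_subset ha)
  set C := connectedComponentIn (j '' s) (j a) with hCdef
  have hsub : C ⊆ j '' s := connectedComponentIn_subset _ _
  have hCr : C ⊆ range j := hsub.trans (image_subset_range _ _)
  have himg : j '' (j ⁻¹' C) = C := image_preimage_eq_of_subset hCr
  have hD : IsPreconnected (j ⁻¹' C) := by
    rw [← hj.isInducing.isPreconnected_image, himg]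
    exact isPreconnected_connectedComponentIn
  have hDs : j ⁻¹' C ⊆ s := by
    intro x hx
    obtain ⟨y, hy, hxy⟩ := hsub hx
    rwa [← hj.injective hxy]
  have haD : a ∈ j ⁻¹' C := mem_connectedComponentIn ⟨a, ha, rfl⟩
  calc C = j '' (j ⁻¹' C) := himg.symm
  _ ⊆ j '' connectedComponentIn s a :=
      image_mono (hD.subset_connectedComponentIn haD hDs)

section Transfer

variable {M T : Type*} [TopologicalSpace M] [TopologicalSpace T] {s : Set T}

/-- The inclusion `M × ↥s → M × T`. -/
def emb (s : Set T) : M × ↥s → M × T := fun p => (p.1, p.2.val)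

lemma emb_openEmbedding (hs : IsOpen s) : Topology.IsOpenEmbedding (emb (M := M) s) := by
  have : emb (M := M) s = Prod.map id Subtype.val := rfl
  rw [this]
  exact Topology.IsOpenEmbedding.id.prodMap hs.isOpenEmbedding_subtypeVal

open Classical in
/-- Lift a tangential contraction along the inclusion. -/
noncomputable def liftH (s : Set T) (H : (M × ↥s) × ℝ → M × ↥s) : (M × T) × ℝ → M × T :=
  fun z => if h : z.1.2 ∈ s then emb s (H ((z.1.1, ⟨z.1.2, h⟩), z.2)) else z.1

lemma liftH_comm (s : Set T) (H : (M × ↥s) × ℝ → M × ↥s) (y : M × ↥s) (r : ℝ) :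
    liftH s H (emb s y, r) = emb s (H (y, r)) := by
  simp only [liftH, emb, dif_pos y.2.2]
  exact dif_pos y.2.2

lemma liftH_contraction (hs : IsOpen s) {U : Set (M × ↥s)} {H : (M × ↥s) × ℝ → M × ↥s}
    (hH : IsTangentialContraction U H) :
    IsTangentialContraction (emb s '' U) (liftH s H) := by
  have hje : Topology.IsOpenEmbedding (Prod.map (emb (M := M) s) (id : ℝ → ℝ)) :=
    (emb_openEmbedding hs).prodMap Topology.IsOpenEmbedding.id
  constructor
  · have himg : (emb s '' U) ×ˢ Icc (0:ℝ) 1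
        = (Prod.map (emb (M := M) s) (id : ℝ → ℝ)) '' (U ×ˢ Icc (0:ℝ) 1) := by
      have := Set.prod_image_image_eq (s := U) (t := Icc (0:ℝ) 1)
        (m₁ := emb (M := M) s) (m₂ := (id : ℝ → ℝ))
      rw [image_id] at this
      rw [this]; rfl
    rw [himg]
    apply myContinuousOn_image hje
    refine (((emb_openEmbedding hs).continuous.comp_continuousOn hH.continuousOn)).congr ?_
    intro q _
    show liftH s H (emb s q.1, q.2) = emb s (H q)
    rw [liftH_comm]
  · rintro x ⟨y, hy, rfl⟩ t ht
    rw [liftH_comm]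
    show (H (y, t)).2.val = y.2.val
    rw [hH.leafwise y hy t ht]
  · rintro x ⟨y, hy, rfl⟩
    rw [liftH_comm, hH.init y hy]
  · rintro x y ⟨a, ha, rfl⟩ hy
    have hset : {z ∈ emb s '' U | z.2 = (emb s a).2}
        = emb s '' {w ∈ U | w.2 = a.2} := by
      ext z
      constructor
      · rintro ⟨⟨w, hw, rfl⟩, h2⟩
        exact ⟨w, ⟨hw, Subtype.ext h2⟩, rfl⟩
      · rintro ⟨w, ⟨hw, h2⟩, rfl⟩
        exact ⟨⟨w, hw, rfl⟩, congrArg Subtype.val h2⟩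
    rw [hset, myConnCompIn_image (emb_openEmbedding hs).isEmbedding _ (show a ∈ {w | w ∈ U ∧ w.2 = a.2} from ⟨ha, rfl⟩)] at hy
    obtain ⟨b, hb, rfl⟩ := hy
    rw [liftH_comm, liftH_comm, hH.final a b ha hb]


/-- Restrict a tangential contraction to the slab over `s`. -/
noncomputable def restrH (s : Set T) (H : (M × T) × ℝ → M × T) : (M × ↥s) × ℝ → M × ↥s :=
  fun q => ((H (emb s q.1, q.2)).1, q.1.2)

lemma restrH_contraction (hs : IsOpen s) {U : Set (M × T)} {H : (M × T) × ℝ → M × T}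
    (hH : IsTangentialContraction U H) :
    IsTangentialContraction (emb s ⁻¹' U) (restrH s H) := by
  constructor
  · apply ContinuousOn.prodMk
    · have hc : Continuous (fun q : (M × ↥s) × ℝ => (emb s q.1, q.2)) :=
        ((emb_openEmbedding hs).continuous.comp continuous_fst).prodMk continuous_snd
      have hmaps : MapsTo (fun q : (M × ↥s) × ℝ => (emb s q.1, q.2))
          ((emb s ⁻¹' U) ×ˢ Icc (0:ℝ) 1) (U ×ˢ Icc (0:ℝ) 1) := by
        rintro ⟨p, r⟩ ⟨hp, hr⟩
        exact ⟨hp, hr⟩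
      exact continuous_fst.comp_continuousOn (hH.continuousOn.comp hc.continuousOn hmaps)
    · exact (continuous_snd.comp continuous_fst).continuousOn
  · intro x _ t _
    rfl
  · intro x hx
    show ((H (emb s x, 0)).1, x.2) = x
    rw [hH.init (emb s x) hx]
    rfl
  · intro p q hp hq
    have hq' : q ∈ {z ∈ emb s ⁻¹' U | z.2 = p.2} := connectedComponentIn_subset _ _ hq
    have himg : emb s '' {z ∈ emb s ⁻¹' U | z.2 = p.2} ⊆ {z ∈ U | z.2 = (emb s p).2} := by
      rintro z ⟨w, ⟨hw, hw2⟩, rfl⟩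
      exact ⟨hw, congrArg Subtype.val hw2⟩
    have hmem : emb s q ∈ connectedComponentIn {z ∈ U | z.2 = (emb s p).2} (emb s p) := by
      apply connectedComponentIn_mono _ himg
      exact (emb_openEmbedding hs).continuous.image_connectedComponentIn_subset
        (show p ∈ {z ∈ emb s ⁻¹' U | z.2 = p.2} from ⟨hp, rfl⟩) ⟨q, hq, rfl⟩
    have hfin := hH.final (emb s p) (emb s q) hp hmem
    show ((H (emb s p, 1)).1, p.2) = ((H (emb s q, 1)).1, q.2)
    exact Prod.ext (by rw [hfin]) hq'.2.symm

lemma emb_image_preimage (s : Set T) (U : Set (M × T)) :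
    emb s '' (emb s ⁻¹' U) = U ∩ {z : M × T | z.2 ∈ s} := by
  rw [image_preimage_eq_inter_range]
  congr 1
  ext z
  constructor
  · rintro ⟨w, rfl⟩
    exact w.2.2
  · intro hz
    exact ⟨(z.1, ⟨z.2, hz⟩), rfl⟩

lemma restrH_image {U : Set (M × T)} {H : (M × T) × ℝ → M × T}
    (hH : IsTangentialContraction U H) :
    emb s '' ((fun p => restrH s H (p, 1)) '' (emb s ⁻¹' U))
      = (fun x => H (x, 1)) '' (U ∩ {z : M × T | z.2 ∈ s}) := by
  rw [← emb_image_preimage, ← image_comp, ← image_comp]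
  apply image_congr
  intro p hp
  show emb s (restrH s H (p, 1)) = H (emb s p, 1)
  have hl := hH.leafwise (emb s p) hp 1 ⟨zero_le_one, le_refl 1⟩
  exact Prod.ext rfl hl.symm

variable [MeasurableSpace T]

lemma lamMeasure_emb_image (hs : MeasurableSet s) (Λ : Measure T) (A : Set (M × ↥s)) :
    lamMeasure M (Λ.comap (Subtype.val : ↥s → T)) A = lamMeasure M Λ (emb s '' A) := by
  have hemb : MeasurableEmbedding (Subtype.val : ↥s → T) := MeasurableEmbedding.subtype_coe hs
  set g : T → ℝ≥0∞ := fun t => ({m : M | (m, t) ∈ emb s '' A}.encard : ℝ≥0∞) with hg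
  have hg0 : ∀ t ∉ s, g t = 0 := by
    intro t ht
    have hempty : {m : M | (m, t) ∈ emb s '' A} = ∅ := by
      ext m; simp only [mem_setOf_eq, mem_empty_iff_false, iff_false]
      rintro ⟨w, _, hw⟩
      have h : (w.2 : T) = t := congrArg Prod.snd hw
      exact ht (h ▸ w.2.2)
    show ({m : M | (m, t) ∈ emb s '' A}.encard : ℝ≥0∞) = 0
    rw [hempty]
    simp
  have hind : g = s.indicator g := by
    ext t; by_cases h : t ∈ s
    · simp [indicator_of_mem h]
    · simp [indicator_of_notMem h, hg0 t h]
  refine Eq.symm ?_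
  calc lamMeasure M Λ (emb s '' A) = ∫⁻ t, s.indicator g t ∂Λ :=
        lintegral_congr fun t => congrFun hind t
  _ = ∫⁻ t, g t ∂(Λ.restrict s) := lintegral_indicator hs g
  _ = ∫⁻ t, g t ∂((Λ.comap (Subtype.val : ↥s → T)).map Subtype.val) := by
        rw [hemb.map_comap Λ, Subtype.range_coe]
  _ = ∫⁻ u : ↥s, g u.val ∂(Λ.comap (Subtype.val : ↥s → T)) := hemb.lintegral_map g
  _ = lamMeasure M (Λ.comap (Subtype.val : ↥s → T)) A := by
        apply lintegral_congr
        intro u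
        have hset : {m : M | (m, (u : T)) ∈ emb s '' A} = {m : M | (m, u) ∈ A} := by
          ext m
          constructor
          · rintro ⟨w, hw, hwe⟩
            have h1' : w.1 = m := congrArg Prod.fst hwe
            have h2' : w.2 = u := Subtype.ext (congrArg Prod.snd hwe)
            have hwmu : w = (m, u) := Prod.ext h1' h2'
            show (m, u) ∈ A
            rwa [hwmu] at hw
          · intro hm
            exact ⟨(m, u), hm, rfl⟩
        show ((({m : M | (m, (u : T)) ∈ emb s '' A}).encard : ℕ∞) : ℝ≥0∞) = _
        rw [hset]

lemma tauLam_emb_le (hs : IsOpen s) (hsm : MeasurableSet s) (Λ : Measure T)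
    (U : Set (M × ↥s)) :
    tauLam Λ (emb s '' U) ≤ tauLam (Λ.comap (Subtype.val : ↥s → T)) U := by
  apply le_iInf
  rintro ⟨H, hH⟩
  have himg : (fun x => liftH s H (x,1)) '' (emb s '' U)
      = emb s '' ((fun x => H (x,1)) '' U) := by
    rw [← image_comp, ← image_comp]
    apply image_congr
    intro y _
    exact liftH_comm s H y 1
  calc tauLam Λ (emb s '' U)
      ≤ lamMeasure M Λ ((fun x => liftH s H (x,1)) '' (emb s '' U)) :=
        iInf_le _ (⟨liftH s H, liftH_contraction hs hH⟩ :
          { H' // IsTangentialContraction (emb s '' U) H' })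
  _ = lamMeasure M (Λ.comap (Subtype.val : ↥s → T)) ((fun x => H (x,1)) '' U) := by
        rw [himg, ← lamMeasure_emb_image hsm]


lemma tsum_tauLam_restr_le (Λ : Measure T) (Tk : ℕ → Set T) (hTk : ∀ k, IsOpen (Tk k))
    (hm : ∀ k, MeasurableSet (Tk k)) (hTkcov : (⋃ k, Tk k) = Set.univ)
    (hd : Pairwise (Function.onFun Disjoint Tk))
    {U : Set (M × T)} {H : (M × T) × ℝ → M × T} (hH : IsTangentialContraction U H) :
    ∑' k, tauLam (Λ.comap (Subtype.val : ↥(Tk k) → T)) (emb (Tk k) ⁻¹' U)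
      ≤ lamMeasure M Λ ((fun x => H (x, 1)) '' U) := by
  set A : ℕ → Set (M × T) := fun k => (fun x => H (x, 1)) '' (U ∩ {z : M × T | z.2 ∈ Tk k})
    with hA
  have step1 : ∀ k, tauLam (Λ.comap (Subtype.val : ↥(Tk k) → T)) (emb (Tk k) ⁻¹' U)
      ≤ lamMeasure M Λ (A k) := by
    intro k
    calc tauLam (Λ.comap (Subtype.val : ↥(Tk k) → T)) (emb (Tk k) ⁻¹' U)
        ≤ lamMeasure M (Λ.comap (Subtype.val : ↥(Tk k) → T))
            ((fun p => restrH (Tk k) H (p, 1)) '' (emb (Tk k) ⁻¹' U)) :=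
          iInf_le _ (⟨restrH (Tk k) H, restrH_contraction (hTk k) hH⟩ :
            { H' // IsTangentialContraction (emb (Tk k) ⁻¹' U) H' })
    _ = lamMeasure M Λ (A k) := by
          rw [lamMeasure_emb_image (hm k), restrH_image hH]
  refine (ENNReal.tsum_le_tsum step1).trans ?_
  set g : T → ℝ≥0∞ := fun t => ({m : M | (m, t) ∈ (fun x => H (x, 1)) '' U}.encard : ℝ≥0∞)
    with hg
  have hGk : ∀ k, lamMeasure M Λ (A k) ≤ ∫⁻ t, g t ∂(Λ.restrict (Tk k)) := by
    intro k
    set gk : T → ℝ≥0∞ := fun t => ({m : M | (m, t) ∈ A k}.encard : ℝ≥0∞) with hgk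
    have h0 : ∀ t ∉ Tk k, gk t = 0 := by
      intro t ht
      have hempty : {m : M | (m, t) ∈ A k} = ∅ := by
        ext m
        simp only [mem_setOf_eq, mem_empty_iff_false, iff_false]
        rintro ⟨x, ⟨hxU, hxs⟩, hxe⟩
        have h2 : (H (x, 1)).2 = x.2 := hH.leafwise x hxU 1 ⟨zero_le_one, le_refl 1⟩
        have h3 : (H (x, 1)).2 = t := congrArg Prod.snd hxe
        exact ht (by rw [← h3, h2]; exact hxs)
      show ({m : M | (m, t) ∈ A k}.encard : ℝ≥0∞) = 0
      rw [hempty]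
      simp
    have hind : gk = (Tk k).indicator gk := by
      ext t
      by_cases h : t ∈ Tk k
      · simp [indicator_of_mem h]
      · simp [indicator_of_notMem h, h0 t h]
    calc lamMeasure M Λ (A k) = ∫⁻ t, (Tk k).indicator gk t ∂Λ :=
          lintegral_congr fun t => congrFun hind t
    _ = ∫⁻ t, gk t ∂(Λ.restrict (Tk k)) := lintegral_indicator (hm k) gk
    _ ≤ ∫⁻ t, g t ∂(Λ.restrict (Tk k)) := by
          apply lintegral_mono
          intro t
          have hsub : {m : M | (m, t) ∈ A k} ⊆ {m : M | (m, t) ∈ (fun x => H (x, 1)) '' U} :=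
            fun m hm' => image_mono inter_subset_left hm'
          show ({m : M | (m, t) ∈ A k}.encard : ℝ≥0∞)
            ≤ ({m : M | (m, t) ∈ (fun x => H (x, 1)) '' U}.encard : ℝ≥0∞)
          exact_mod_cast Set.encard_mono hsub
  calc ∑' k, lamMeasure M Λ (A k) ≤ ∑' k, ∫⁻ t, g t ∂(Λ.restrict (Tk k)) :=
        ENNReal.tsum_le_tsum hGk
  _ = ∫⁻ t, g t ∂(Measure.sum fun k => Λ.restrict (Tk k)) := (lintegral_sum_measure g _).symm
  _ = ∫⁻ t, g t ∂Λ := by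
        rw [← Measure.restrict_iUnion hd hm, hTkcov, Measure.restrict_univ]
  _ = lamMeasure M Λ ((fun x => H (x, 1)) '' U) := rfl

theorem tsum_lamCat_le (Λ : Measure T) (Tk : ℕ → Set T) (hTk : ∀ k, IsOpen (Tk k))
    (hm : ∀ k, MeasurableSet (Tk k)) (hTkcov : (⋃ k, Tk k) = Set.univ)
    (hd : Pairwise (Function.onFun Disjoint Tk)) :
    ∑' k, lamCat M ↥(Tk k) (Λ.comap (Subtype.val : ↥(Tk k) → T)) ≤ lamCat M T Λ := by
  apply le_sInf
  rintro m ⟨U, hUopen, hUcov, hUcontr, rfl⟩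
  have step : ∀ k, lamCat M ↥(Tk k) (Λ.comap (Subtype.val : ↥(Tk k) → T))
      ≤ ∑' i, tauLam (Λ.comap (Subtype.val : ↥(Tk k) → T)) (emb (Tk k) ⁻¹' U i) := by
    intro k
    apply sInf_le
    refine ⟨fun i => emb (Tk k) ⁻¹' U i,
      fun i => (hUopen i).preimage (emb_openEmbedding (hTk k)).continuous, ?_, fun i => ?_, rfl⟩
    · rw [← preimage_iUnion, hUcov, preimage_univ]
    · obtain ⟨H, hH⟩ := hUcontr i
      exact ⟨restrH (Tk k) H, restrH_contraction (hTk k) hH⟩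
  calc ∑' k, lamCat M ↥(Tk k) (Λ.comap (Subtype.val : ↥(Tk k) → T))
      ≤ ∑' k, ∑' i, tauLam (Λ.comap (Subtype.val : ↥(Tk k) → T)) (emb (Tk k) ⁻¹' U i) :=
        ENNReal.tsum_le_tsum step
  _ = ∑' i, ∑' k, tauLam (Λ.comap (Subtype.val : ↥(Tk k) → T)) (emb (Tk k) ⁻¹' U i) :=
        ENNReal.tsum_comm
  _ ≤ ∑' i, tauLam Λ (U i) :=
        ENNReal.tsum_le_tsum fun i => le_iInf fun H' =>
          tsum_tauLam_restr_le Λ Tk hTk hm hTkcov hd H'.2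

theorem lamCat_le_tsum (Λ : Measure T) (Tk : ℕ → Set T) (hTk : ∀ k, IsOpen (Tk k))
    (hm : ∀ k, MeasurableSet (Tk k)) (hTkcov : (⋃ k, Tk k) = Set.univ) :
    lamCat M T Λ ≤ ∑' k, lamCat M ↥(Tk k) (Λ.comap (Subtype.val : ↥(Tk k) → T)) := by
  classical
  set R := ∑' k, lamCat M ↥(Tk k) (Λ.comap (Subtype.val : ↥(Tk k) → T)) with hR
  apply ENNReal.le_of_forall_pos_le_add
  intro ε hε hRtop
  obtain ⟨δ, hδpos, hδsum⟩ := ENNReal.exists_pos_sum_of_countable'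
    (by exact_mod_cast hε.ne' : (ε : ℝ≥0∞) ≠ 0) ℕ
  have hk : ∀ k, ∃ (U : ℕ → Set (M × ↥(Tk k))), (∀ i, IsOpen (U i)) ∧
      (⋃ i, U i) = Set.univ ∧ (∀ i, ∃ H, IsTangentialContraction (U i) H) ∧
      ∑' i, tauLam (Λ.comap (Subtype.val : ↥(Tk k) → T)) (U i)
        < lamCat M ↥(Tk k) (Λ.comap (Subtype.val : ↥(Tk k) → T)) + δ k := by
    intro k
    have hfin : lamCat M ↥(Tk k) (Λ.comap (Subtype.val : ↥(Tk k) → T)) ≠ ⊤ :=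
      ne_top_of_le_ne_top hRtop.ne (hR ▸ ENNReal.le_tsum k)
    have hlt : lamCat M ↥(Tk k) (Λ.comap (Subtype.val : ↥(Tk k) → T))
        < lamCat M ↥(Tk k) (Λ.comap (Subtype.val : ↥(Tk k) → T)) + δ k :=
      ENNReal.lt_add_right hfin (hδpos k).ne'
    obtain ⟨m, hmem, hmlt⟩ := sInf_lt_iff.mp hlt
    obtain ⟨U, h1, h2, h3, rfl⟩ := hmem
    exact ⟨U, h1, h2, h3, hmlt⟩
  choose U hUopen hUcov hUcontr hUsum using hk
  set V : ℕ × ℕ → Set (M × T) := fun p => emb (Tk p.1) '' U p.1 p.2 with hV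
  set q : ℕ × ℕ ≃ ℕ := Denumerable.eqv (ℕ × ℕ) with hq
  have hVopen : ∀ p, IsOpen (V p) := fun p =>
    (emb_openEmbedding (hTk p.1)).isOpenMap _ (hUopen p.1 p.2)
  have hVcontr : ∀ p : ℕ × ℕ, ∃ H, IsTangentialContraction (V p) H := by
    intro p
    obtain ⟨H, hH⟩ := hUcontr p.1 p.2
    exact ⟨liftH (Tk p.1) H, liftH_contraction (hTk p.1) hH⟩
  have hVcov : (⋃ n, V (q.symm n)) = Set.univ := by
    apply eq_univ_of_forall
    intro x
    have hx2 : x.2 ∈ ⋃ k, Tk k := by rw [hTkcov]; trivial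
    obtain ⟨k, ht⟩ := mem_iUnion.mp hx2
    have hx1 : (x.1, (⟨x.2, ht⟩ : ↥(Tk k))) ∈ ⋃ i, U k i := by rw [hUcov k]; trivial
    obtain ⟨i, hi⟩ := mem_iUnion.mp hx1
    refine mem_iUnion.mpr ⟨q (k, i), ?_⟩
    rw [Equiv.symm_apply_apply]
    exact ⟨(x.1, ⟨x.2, ht⟩), hi, rfl⟩
  have hstep : lamCat M T Λ ≤ ∑' n, tauLam Λ (V (q.symm n)) :=
    sInf_le ⟨fun n => V (q.symm n), fun n => hVopen _, hVcov, fun n => hVcontr _, rfl⟩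
  refine hstep.trans ?_
  have he : ∑' n, tauLam Λ (V (q.symm n)) = ∑' p, tauLam Λ (V p) :=
    q.symm.tsum_eq (fun p => tauLam Λ (V p))
  rw [he]
  calc ∑' p : ℕ × ℕ, tauLam Λ (V p) = ∑' k, ∑' i, tauLam Λ (V (k, i)) := ENNReal.tsum_prod (f := fun a b => tauLam Λ (V (a, b)))
  _ ≤ ∑' k, (lamCat M ↥(Tk k) (Λ.comap (Subtype.val : ↥(Tk k) → T)) + δ k) := by
      refine ENNReal.tsum_le_tsum fun k => ?_
      refine le_trans ?_ (hUsum k).le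
      exact ENNReal.tsum_le_tsum fun i => tauLam_emb_le (hTk k) (hm k) Λ (U k i)
  _ = R + ∑' k, δ k := ENNReal.tsum_add
  _ ≤ R + ε := add_le_add le_rfl hδsum.le

end Transfer


/-- for a countable family of open sets `T_k` covering `T`, the measured
category of the product lamination satisfies
`Cat(M×T, Λ) ≤ Σ_k Cat(M×T_k, Λ|_{T_k})` (where `Λ|_{T_k}` is the restriction of `Λ`
along the inclusion `T_k ↪ T`), with equality when the `T_k` are pairwise disjoint. -/
theorem stmt10 {M T : Type*} [TopologicalSpace M] [T2Space M] [ConnectedSpace M]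
    (n : ℕ) [ChartedSpace (EuclideanSpace ℝ (Fin n)) M]
    [TopologicalSpace T] [PolishSpace T] [LocallyCompactSpace T]
    [MeasurableSpace T] [BorelSpace T] (Λ : Measure T)
    (Tk : ℕ → Set T) (hTk : ∀ k, IsOpen (Tk k)) (hTkcov : (⋃ k, Tk k) = Set.univ) :
    lamCat M T Λ ≤ ∑' k, lamCat M ↥(Tk k) (Λ.comap (Subtype.val : ↥(Tk k) → T)) ∧
    (Pairwise (Function.onFun Disjoint Tk) →
      lamCat M T Λ = ∑' k, lamCat M ↥(Tk k) (Λ.comap (Subtype.val : ↥(Tk k) → T))) := by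
  have hm : ∀ k, MeasurableSet (Tk k) := fun k => (hTk k).measurableSet
  refine ⟨lamCat_le_tsum Λ Tk hTk hm hTkcov, fun hd => ?_⟩
  exact le_antisymm (lamCat_le_tsum Λ Tk hTk hm hTkcov)
    (tsum_lamCat_le Λ Tk hTk hm hTkcov hd)
end
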